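/- Let c, C > 0 be absolute constants and let Σ̃ ∈ ℝ^{d×d} be positive definite with c·Id ⪯ Σ̃ ⪯ C·Id. Let x = ξ·Σ̃^{1/2}·(g/‖g‖), where g ∼ N(0, Id_d) and ξ is a positive random variable independent of g, and suppose the distribution of x is C_SE-sub-exponential with C_SE = O(1). Then for every even p ∈ ℕ with p ≤ d: (i) (E ξ^p)^{1/p} ≤ O(√p·(E ξ²)^{1/2}); and (ii) (E ‖x‖^p)^{1/p} ≤ O(√p·(E ‖x‖²)^{1/2}). -/

import Mathlib

open MeasureTheory ProbabilityTheory Matrix Finset Real Filter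

noncomputable section

namespace Paper

variable {d n : ℕ}

/-- Spectral (operator) norm of a matrix. -/
def specNorm (A : Matrix (Fin d) (Fin d) ℝ) : ℝ :=
  ‖LinearMap.toContinuousLinearMap (Matrix.toEuclideanLin A)‖

/-- Frobenius norm of a matrix. -/
def frobNorm (A : Matrix (Fin d) (Fin d) ℝ) : ℝ :=
  Real.sqrt (∑ i, ∑ j, (A i j) ^ 2)

/-- Effective rank. -/
def erk (A : Matrix (Fin d) (Fin d) ℝ) : ℝ := A.trace / specNorm A

open Classical in
/-- Positive semidefinite square root (junk value `0` if not psd). -/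
def matSqrt (A : Matrix (Fin d) (Fin d) ℝ) : Matrix (Fin d) (Fin d) ℝ :=
  if h : A.PosSemidef then
    (h.1.eigenvectorUnitary : Matrix (Fin d) (Fin d) ℝ) *
      diagonal ((↑) ∘ (Real.sqrt ·) ∘ h.1.eigenvalues) *
      (star h.1.eigenvectorUnitary : Matrix (Fin d) (Fin d) ℝ)
  else 0

/-- Inverse of the positive semidefinite square root. -/
def invSqrt (A : Matrix (Fin d) (Fin d) ℝ) : Matrix (Fin d) (Fin d) ℝ := (matSqrt A)⁻¹

/-- Standard Gaussian measure on ℝ^d. -/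
def stdGaussian (d : ℕ) : Measure (Fin d → ℝ) :=
  Measure.pi fun _ => gaussianReal 0 1

/-- Centered Gaussian measure with covariance S. -/
def gaussianOf (S : Matrix (Fin d) (Fin d) ℝ) : Measure (Fin d → ℝ) :=
  (stdGaussian d).map (matSqrt S).mulVec

/-- Spatial sign (projection on the sphere of radius √d). -/
def spSign (d : ℕ) (x : Fin d → ℝ) : Fin d → ℝ :=
  fun i => Real.sqrt d * x i / Real.sqrt (∑ j, (x j) ^ 2)

/-- Truncated spatial sign with threshold Δ. -/
def truncSign (d : ℕ) (Δ : ℝ) (x : Fin d → ℝ) : Fin d → ℝ :=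
  if (∑ i, (x i) ^ 2) < (d : ℝ) - Δ then fun i => Real.sqrt ((d : ℝ) / ((d : ℝ) - Δ)) * x i
  else if (d : ℝ) + Δ < (∑ i, (x i) ^ 2) then fun i => Real.sqrt ((d : ℝ) / ((d : ℝ) + Δ)) * x i
  else spSign d x

/-- Mean vector of a measure on ℝ^d. -/
def meanVec (μ : Measure (Fin d → ℝ)) : Fin d → ℝ := fun i => ∫ x, x i ∂μ

/-- Covariance matrix of a measure on ℝ^d. -/
def covMatrix (μ : Measure (Fin d → ℝ)) : Matrix (Fin d) (Fin d) ℝ :=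
  Matrix.of fun i j => ∫ x, (x i - meanVec μ i) * (x j - meanVec μ j) ∂μ

/-- Inner product of vectors indexed by `ι`. -/
def inner1 {ι : Type*} [Fintype ι] (v x : ι → ℝ) : ℝ := ∑ j, v j * x j

/-- Inner product of "matrices" indexed by `ι × ι`. -/
def innerM {ι : Type*} [Fintype ι] (P Q : ι → ι → ℝ) : ℝ := ∑ j, ∑ k, P j k * Q j k

/-- Outer product. -/
def outer {ι : Type*} (x y : ι → ℝ) : ι → ι → ℝ := fun j k => x j * y k

/-- sup_{v ∈ V} ⟨v, a⟩². -/
def supInner {ι : Type*} [Fintype ι] (V : Set (ι → ℝ)) (a : ι → ℝ) : ℝ :=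
  sSup ((fun v => (inner1 v a) ^ 2) '' V)

/-- Generalized stability (Definition 4 of the paper). -/
def IsStable {ι : Type*} [Fintype ι] (x : Fin n → ι → ℝ) (ε δ r : ℝ)
    (V : Set (ι → ℝ)) (P : Set (ι → ι → ℝ)) (μ : ι → ℝ) (Q : ι → ι → ℝ) : Prop :=
  ∀ v ∈ V, ∀ p ∈ P, ∀ M : Finset (Fin n), (1 - ε) * (n : ℝ) ≤ (M.card : ℝ) →
    |(M.card : ℝ)⁻¹ * ∑ i ∈ M, inner1 v (fun j => x i j - μ j)| ≤ δ ∧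
    |(M.card : ℝ)⁻¹ * ∑ i ∈ M, innerM p (outer (fun j => x i j - μ j) (fun j => x i j - μ j))
        - innerM p Q| ≤ δ ^ 2 / ε ∧
    |innerM p Q| ≤ r ^ 2

/-- 𝒱 ⊗ 𝒱 ⊆ 𝒫. -/
def TensorSub {ι : Type*} (V : Set (ι → ℝ)) (P : Set (ι → ι → ℝ)) : Prop :=
  ∀ v ∈ V, ∀ v' ∈ V, outer v v' ∈ P

/-- Adequacy of 𝒫 with respect to 𝒱. -/
def Adequate {ι : Type*} [Fintype ι] (V : Set (ι → ℝ)) (P : Set (ι → ι → ℝ)) : Prop :=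
  (∀ a : ι → ℝ, ∀ p ∈ P, 0 ≤ innerM p (outer a a)) ∧
  (∀ a b : ι → ℝ, ∀ p ∈ P, (innerM p (outer a b)) ^ 2 ≤ supInner V a * supInner V b)

/-- The weight set 𝒲_ε. -/
def weightSet (n : ℕ) (ε : ℝ) : Set (Fin n → ℝ) :=
  {w | (∀ i, 0 ≤ w i ∧ w i ≤ 1 / (n : ℝ)) ∧ 1 - ε ≤ ∑ i, w i}

/-- Weighted mean μ_w. -/
def wMean {ι : Type*} (w : Fin n → ℝ) (x : Fin n → ι → ℝ) : ι → ℝ :=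
  fun j => (∑ i, w i)⁻¹ * ∑ i, w i * x i j

/-- Weighted covariance Σ_w. -/
def wCov {ι : Type*} (w : Fin n → ℝ) (x : Fin n → ι → ℝ) : ι → ι → ℝ :=
  fun j k => (∑ i, w i)⁻¹ * ∑ i, w i * (x i j - wMean w x j) * (x i k - wMean w x k)

/-- A d×d matrix viewed as a vector in ℝ^{d²}. -/
def mvec (A : Matrix (Fin d) (Fin d) ℝ) : Fin d × Fin d → ℝ := fun p => A p.1 p.2

/-- Id_d as a vector in ℝ^{d²}. -/
def idVec (d : ℕ) : Fin d × Fin d → ℝ := fun p => if p.1 = p.2 then 1 else 0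

/-- 2·Id_{d²}. -/
def twoId (d : ℕ) : (Fin d × Fin d) → (Fin d × Fin d) → ℝ :=
  fun p q => if p = q then 2 else 0

/-- The Frobenius-norm ball ℬ_R (as vectors in ℝ^{d²}). -/
def ballF (d : ℕ) (R : ℝ) : Set (Fin d × Fin d → ℝ) :=
  {V | ∑ p : Fin d × Fin d, (V p) ^ 2 ≤ R ^ 2}

/-- ℬ_R ⊗ ℬ_R. -/
def ballFT (d : ℕ) (R : ℝ) : Set ((Fin d × Fin d) → (Fin d × Fin d) → ℝ) :=
  {P | ∃ V ∈ ballF d R, ∃ W ∈ ballF d R, P = outer V W}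

/-- 𝒮_R = {uuᵀ : ‖u‖ ≤ √R}. -/
def sphereSet (d : ℕ) (R : ℝ) : Set (Fin d × Fin d → ℝ) :=
  {V | ∃ u : Fin d → ℝ, (∑ i, (u i) ^ 2) ≤ R ∧ V = fun p => u p.1 * u p.2}

/-- 𝒫_R: the set of degree-4 pseudo-expectation moment matrices Ẽ[v^{⊗4}]
under the constraint ‖v‖² ≤ R. -/
def pseudoSet (d : ℕ) (R : ℝ) : Set ((Fin d × Fin d) → (Fin d × Fin d) → ℝ) :=
  {P | ∃ L : MvPolynomial (Fin d) ℝ →ₗ[ℝ] ℝ,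
    L 1 = 1 ∧
    (∀ q : MvPolynomial (Fin d) ℝ, q.totalDegree ≤ 2 → 0 ≤ L (q ^ 2)) ∧
    (∀ q : MvPolynomial (Fin d) ℝ, q.totalDegree ≤ 1 →
      0 ≤ L ((MvPolynomial.C R - ∑ i, MvPolynomial.X i ^ 2) * q ^ 2)) ∧
    P = fun p q => L (MvPolynomial.X p.1 * MvPolynomial.X p.2 *
        MvPolynomial.X q.1 * MvPolynomial.X q.2)}

/-- The Hanson–Wright property of a distribution ρ with mean μv and covariance S. -/
def HansonWright (ρ : Measure (Fin d → ℝ)) (μv : Fin d → ℝ)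
    (S : Matrix (Fin d) (Fin d) ℝ) (CHW : ℝ) : Prop :=
  ∀ A : Matrix (Fin d) (Fin d) ℝ, ∀ t : ℝ, 0 < t →
    ρ {x | t ≤ |(∑ j, ∑ k, ((invSqrt S).mulVec (fun l => x l - μv l)) j * A j k *
        ((invSqrt S).mulVec (fun l => x l - μv l)) k) - A.trace|}
      ≤ ENNReal.ofReal (2 * Real.exp (-(1 / CHW) *
          min (t ^ 2 / (frobNorm A) ^ 2) (t / specNorm A)))

/-- ε-corruption of an indexed family of points. -/
def Corruption {α : Type*} (n : ℕ) (ε : ℝ) (x y : Fin n → α) : Prop :=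
  ∃ G : Finset (Fin n), (1 - ε) * (n : ℝ) ≤ (G.card : ℝ) ∧ ∀ i ∈ G, x i = y i

/-- Entries of the 4-tensor E[(xxᵀ − Id)^{⊗2}] of a measure μ on ℝ^d. -/
def tensorEnt (μ : Measure (Fin d → ℝ)) (i1 i2 i3 i4 : Fin d) : ℝ :=
  ∫ x, (x i1 * x i2 - if i1 = i2 then (1 : ℝ) else 0) *
       (x i3 * x i4 - if i3 = i4 then (1 : ℝ) else 0) ∂μ

/-- E[(xxᵀ − Id)^{⊗2}] as a d²×d² matrix. -/
def tensorQ (μ : Measure (Fin d → ℝ)) : (Fin d × Fin d) → (Fin d × Fin d) → ℝ :=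
  fun p q => tensorEnt μ p.1 p.2 q.1 q.2



instance (d : ℕ) : IsProbabilityMeasure (stdGaussian d) := by
  unfold stdGaussian; infer_instance

lemma gauss_eq_wd : gaussianReal 0 1 =
    (volume : Measure ℝ).withDensity (fun x => ((gaussianPDFReal 0 1 x).toNNReal : ENNReal)) := by
  rw [gaussianReal_of_var_ne_zero 0 one_ne_zero]; rfl

lemma integral_gauss (g : ℝ → ℝ) :
    ∫ x, g x ∂(gaussianReal 0 1) = ∫ x, gaussianPDFReal 0 1 x * g x := by
  rw [gauss_eq_wd,
    integral_withDensity_eq_integral_smul ((measurable_gaussianPDFReal 0 1).real_toNNReal) g]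
  congr 1; ext x
  rw [NNReal.smul_def, Real.coe_toNNReal _ (gaussianPDFReal_nonneg _ _ _), smul_eq_mul]

lemma integrable_gauss_iff {g : ℝ → ℝ} :
    Integrable g (gaussianReal 0 1) ↔
      Integrable (fun x => g x * gaussianPDFReal 0 1 x) volume := by
  rw [gauss_eq_wd, integrable_withDensity_iff
    ((measurable_gaussianPDFReal 0 1).real_toNNReal.coe_nnreal_ennreal)
    (Filter.Eventually.of_forall fun x => ENNReal.coe_lt_top)]
  constructor <;> intro h <;>
  · refine h.congr (Filter.Eventually.of_forall fun x => ?_)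
    simp [Real.coe_toNNReal _ (gaussianPDFReal_nonneg 0 1 x)]

lemma pdf_eq (x : ℝ) :
    gaussianPDFReal 0 1 x = (Real.sqrt (2*π))⁻¹ * rexp (-(1/2) * x^2) := by
  rw [gaussianPDFReal]
  norm_num
  left
  congr 1
  ring

lemma integrable_exp_gauss {l : ℝ} (hl : l < 1/2) :
    Integrable (fun x => rexp (l * x^2)) (gaussianReal 0 1) := by
  rw [integrable_gauss_iff]
  have h : (fun x => rexp (l * x^2) * gaussianPDFReal 0 1 x)
      = fun x => (Real.sqrt (2*π))⁻¹ * rexp (-(1/2 - l) * x^2) := by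
    ext x
    rw [pdf_eq, show rexp (l*x^2) * ((Real.sqrt (2*π))⁻¹ * rexp (-(1/2) * x^2))
      = (Real.sqrt (2*π))⁻¹ * (rexp (l*x^2) * rexp (-(1/2) * x^2)) from by ring,
      ← Real.exp_add]
    congr 1; ring
  rw [h]
  exact (integrable_exp_neg_mul_sq (by linarith)).const_mul _

lemma integral_exp_gauss {l : ℝ} (hl : l < 1/2) :
    ∫ x, rexp (l * x^2) ∂(gaussianReal 0 1) = Real.sqrt (1/(1-2*l)) := by
  rw [integral_gauss]
  have h : (fun x => gaussianPDFReal 0 1 x * rexp (l * x^2))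
      = fun x => (Real.sqrt (2*π))⁻¹ * rexp (-(1/2 - l) * x^2) := by
    ext x
    rw [pdf_eq, show (Real.sqrt (2*π))⁻¹ * rexp (-(1/2) * x^2) * rexp (l*x^2)
      = (Real.sqrt (2*π))⁻¹ * (rexp (l*x^2) * rexp (-(1/2) * x^2)) from by ring,
      ← Real.exp_add]
    congr 1; ring
  rw [h, integral_const_mul, integral_gaussian, ← Real.sqrt_inv, ← Real.sqrt_mul (by positivity)]
  congr 1
  have h1 : (0:ℝ) < 1 - 2*l := by linarith
  have h2 : (0:ℝ) < π := pi_pos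
  field_simp

lemma integrable_abs_pow_gauss (k : ℕ) :
    Integrable (fun x => |x|^k) (gaussianReal 0 1) := by
  rw [integrable_gauss_iff]
  refine Integrable.mono' (g := fun x => ((k.factorial : ℝ) * rexp 1 * (Real.sqrt (2*π))⁻¹) *
      rexp (-(1/4 : ℝ) * x^2)) ((integrable_exp_neg_mul_sq (by norm_num)).const_mul _)
    ((measurable_abs.pow_const k).mul (measurable_gaussianPDFReal 0 1)).aestronglyMeasurable
    (Filter.Eventually.of_forall fun x => ?_)
  have h0 : 0 ≤ |x|^k * gaussianPDFReal 0 1 x :=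
    mul_nonneg (pow_nonneg (abs_nonneg x) k) (gaussianPDFReal_nonneg 0 1 x)
  rw [Real.norm_eq_abs, abs_of_nonneg h0, pdf_eq]
  have h1 : |x|^k ≤ (k.factorial : ℝ) * rexp |x| := by
    have h2 : |x|^k / (k.factorial : ℝ) ≤ rexp |x| :=
      le_trans (Finset.single_le_sum (f := fun i => |x|^i / (i.factorial : ℝ))
        (fun i _ => by positivity) (Finset.self_mem_range_succ k))
        (Real.sum_le_exp_of_nonneg (abs_nonneg x) (k+1))
    have h3 : (0:ℝ) < (k.factorial : ℝ) := by positivity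
    calc |x|^k = |x|^k / (k.factorial : ℝ) * (k.factorial : ℝ) := by field_simp
    _ ≤ rexp |x| * (k.factorial : ℝ) := mul_le_mul_of_nonneg_right h2 (le_of_lt h3)
    _ = (k.factorial : ℝ) * rexp |x| := by ring
  have h4 : rexp |x| * rexp (-(1/2) * x^2) ≤ rexp 1 * rexp (-(1/4 : ℝ) * x^2) := by
    rw [← Real.exp_add, ← Real.exp_add]
    apply Real.exp_le_exp.2
    nlinarith [sq_nonneg (|x| - 2), sq_abs x]
  calc |x|^k * ((Real.sqrt (2*π))⁻¹ * rexp (-(1/2) * x^2))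
      ≤ ((k.factorial : ℝ) * rexp |x|) * ((Real.sqrt (2*π))⁻¹ * rexp (-(1/2) * x^2)) :=
        mul_le_mul_of_nonneg_right h1 (by positivity)
    _ = (k.factorial : ℝ) * (Real.sqrt (2*π))⁻¹ * (rexp |x| * rexp (-(1/2) * x^2)) := by ring
    _ ≤ (k.factorial : ℝ) * (Real.sqrt (2*π))⁻¹ * (rexp 1 * rexp (-(1/4 : ℝ) * x^2)) :=
        mul_le_mul_of_nonneg_left h4 (by positivity)
    _ = (k.factorial : ℝ) * rexp 1 * (Real.sqrt (2*π))⁻¹ * rexp (-(1/4 : ℝ) * x^2) := by ring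

lemma integrable_sq_gauss : Integrable (fun x : ℝ => x^2) (gaussianReal 0 1) :=
  (integrable_abs_pow_gauss 2).congr (Filter.Eventually.of_forall fun x => by
    simp [sq_abs])

lemma integral_sq_gauss_le : ∫ x, x^2 ∂(gaussianReal 0 1) ≤ 10 := by
  have h1 : ∫ x, x^2 ∂(gaussianReal 0 1) ≤ ∫ x, 8 * rexp ((1/8) * x^2) ∂(gaussianReal 0 1) := by
    refine integral_mono integrable_sq_gauss ((integrable_exp_gauss (by norm_num)).const_mul 8)
      fun x => ?_
    have := Real.add_one_le_exp ((1/8) * x^2)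
    nlinarith
  rw [integral_const_mul, integral_exp_gauss (by norm_num)] at h1
  have h2 : Real.sqrt (1/(1-2*(1/8 : ℝ))) ≤ 5/4 := by
    rw [show (1/(1-2*(1/8 : ℝ))) = 4/3 by norm_num,
      show (5/4 : ℝ) = Real.sqrt ((5/4)^2) by rw [Real.sqrt_sq]; norm_num]
    apply Real.sqrt_le_sqrt; norm_num
  linarith


lemma integral_pi_prod : ∀ {k : ℕ} (f : Fin k → ℝ → ℝ),
    ∫ x, ∏ i, f i (x i) ∂(stdGaussian k) = ∏ i, ∫ t, f i t ∂(gaussianReal 0 1) := by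
  intro k
  induction k with
  | zero =>
    intro f
    simp only [Finset.univ_eq_empty, Finset.prod_empty]
    simp
  | succ n ih =>
    intro f
    have hmp := (MeasureTheory.measurePreserving_piFinSuccAbove
      (fun _ : Fin (n+1) => gaussianReal 0 1) 0).symm
    rw [stdGaussian, ← hmp.integral_comp']
    simp_rw [MeasurableEquiv.piFinSuccAbove_symm_apply, Fin.insertNthEquiv,
      Equiv.coe_fn_mk, Fin.insertNth_zero, Fin.prod_univ_succ,
      Fin.cons_zero, Fin.cons_succ, cast_eq]
    rw [integral_prod_mul (f := fun t => f 0 t)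
      (g := fun y : Fin n → ℝ => ∏ i : Fin n, f i.succ (y i))]
    rw [show (Measure.pi fun _ : Fin n => gaussianReal 0 1) = stdGaussian n from rfl, ih]

lemma integrable_pi_prod {k : ℕ} (f : Fin k → ℝ → ℝ)
    (hf : ∀ i, Integrable (f i) (gaussianReal 0 1)) :
    Integrable (fun x => ∏ i, f i (x i)) (stdGaussian k) := by
  induction k with
  | zero =>
    simp only [Finset.univ_eq_empty, Finset.prod_empty]
    exact integrable_const 1
  | succ n ih =>
    have hmp := (MeasureTheory.measurePreserving_piFinSuccAbove
      (fun _ : Fin (n+1) => gaussianReal 0 1) 0).symm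
    have hemb := (MeasurableEquiv.piFinSuccAbove (fun _ : Fin (n+1) => ℝ) 0).symm.measurableEmbedding
    rw [stdGaussian, ← hmp.integrable_comp_emb hemb]
    have h : ((fun x : Fin (n+1) → ℝ => ∏ i, f i (x i)) ∘
        (MeasurableEquiv.piFinSuccAbove (fun _ : Fin (n+1) => ℝ) 0).symm)
        = fun z : ℝ × (Fin n → ℝ) => f 0 z.1 * ∏ i : Fin n, f i.succ (z.2 i) := by
      ext z
      simp only [Function.comp_apply, MeasurableEquiv.piFinSuccAbove_symm_apply,
        Fin.insertNthEquiv, Equiv.coe_fn_mk, Fin.insertNth_zero, Fin.prod_univ_succ,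
        Fin.zero_succAbove, cast_eq, Fin.cons_zero, Fin.cons_succ]
    rw [h]
    have h2 : Integrable (fun y : Fin n → ℝ => ∏ i : Fin n, f i.succ (y i)) (stdGaussian n) :=
      ih (fun i => f i.succ) (fun i => hf i.succ)
    exact (hf 0).mul_prod h2

lemma prod_coord_eq {k : ℕ} (i0 : Fin k) (f : ℝ → ℝ) (x : Fin k → ℝ) :
    (∏ i, if i = i0 then f (x i) else 1) = f (x i0) := by
  rw [Finset.prod_ite_eq' Finset.univ i0 (fun i => f (x i))]
  simp

lemma integral_pi_coord {k : ℕ} (i0 : Fin k) (f : ℝ → ℝ) :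
    ∫ x, f (x i0) ∂(stdGaussian k) = ∫ t, f t ∂(gaussianReal 0 1) := by
  have key := integral_pi_prod (fun i (t : ℝ) => if i = i0 then f t else 1)
  simp_rw [prod_coord_eq i0 f] at key
  rw [key]
  have h2 : ∀ i : Fin k, (∫ t, (if i = i0 then f t else 1) ∂(gaussianReal 0 1))
      = if i = i0 then ∫ t, f t ∂(gaussianReal 0 1) else 1 := by
    intro i
    by_cases hi : i = i0 <;> simp [hi]
  simp_rw [h2]
  rw [Finset.prod_ite_eq' Finset.univ i0 (fun _ => ∫ t, f t ∂(gaussianReal 0 1))]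
  simp

lemma integrable_pi_coord {k : ℕ} (i0 : Fin k) (f : ℝ → ℝ)
    (hf : Integrable f (gaussianReal 0 1)) :
    Integrable (fun x => f (x i0)) (stdGaussian k) := by
  have key := integrable_pi_prod (fun i (t : ℝ) => if i = i0 then f t else 1) ?_
  · simp_rw [prod_coord_eq i0 f] at key
    exact key
  · intro i
    by_cases hi : i = i0
    · simpa [hi] using hf
    · simp [hi]


lemma my_cauchy {α : Type*} [MeasurableSpace α] (μ : Measure α) (F G : α → ℝ)
    (hFm : Measurable F) (hGm : Measurable G) (hFn : ∀ x, 0 ≤ F x) (hGn : ∀ x, 0 ≤ G x)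
    (hF2 : Integrable (fun x => F x ^ 2) μ) (hG2 : Integrable (fun x => G x ^ 2) μ) :
    (∫ x, F x * G x ∂μ) ^ 2 ≤ (∫ x, F x ^ 2 ∂μ) * ∫ x, G x ^ 2 ∂μ := by
  have hFG : Integrable (fun x => F x * G x) μ := by
    refine Integrable.mono' ((hF2.add hG2).div_const 2) (hFm.mul hGm).aestronglyMeasurable
      (Filter.Eventually.of_forall fun x => ?_)
    simp only [Pi.add_apply]
    rw [Real.norm_eq_abs, abs_of_nonneg (mul_nonneg (hFn x) (hGn x))]
    nlinarith [sq_nonneg (F x - G x)]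
  set a := ∫ x, F x ^ 2 ∂μ with ha_def
  set b := ∫ x, G x ^ 2 ∂μ with hb_def
  set I := ∫ x, F x * G x ∂μ with hI_def
  have ha : 0 ≤ a := integral_nonneg fun x => sq_nonneg _
  have hb : 0 ≤ b := integral_nonneg fun x => sq_nonneg _
  have key : ∀ r : ℝ, 0 ≤ a * r^2 - 2 * I * r + b := by
    intro r
    have h0 : 0 ≤ ∫ x, (r * F x - G x)^2 ∂μ := integral_nonneg fun x => sq_nonneg _
    have h1 : ∫ x, (r * F x - G x)^2 ∂μ = a * r^2 - 2 * I * r + b := by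
      have : (fun x => (r * F x - G x)^2)
          = fun x => r^2 * F x ^2 - (2*r) * (F x * G x) + G x ^2 := by
        ext x; ring
      have hi1 : Integrable (fun x => r^2 * F x ^2 - 2*r * (F x * G x)) μ :=
        (hF2.const_mul _).sub (hFG.const_mul _)
      rw [this, integral_add hi1 hG2,
        integral_sub (hF2.const_mul _) (hFG.const_mul _), integral_const_mul,
        integral_const_mul]
      ring
    linarith [h1 ▸ h0]
  rcases eq_or_lt_of_le ha with ha0 | ha0
  · have hF0 : (fun x => F x ^ 2) =ᵐ[μ] 0 :=
      (integral_eq_zero_iff_of_nonneg (fun x => sq_nonneg _) hF2).1 ha0.symm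
    have hI0 : I = 0 := by
      rw [hI_def]
      rw [← integral_zero α ℝ (μ := μ)]
      refine integral_congr_ae (hF0.mono fun x hx => ?_)
      have : F x = 0 := by
        have := hx
        simp only [Pi.zero_apply] at this
        nlinarith [this]
      simp [this]
    rw [hI0, ← ha0]
    norm_num
  · have h := key (I / a)
    have ha' : a ≠ 0 := ne_of_gt ha0
    rw [div_pow] at h
    have h2 : a * (I^2/a^2) = I^2/a := by field_simp
    rw [h2] at h
    have h3 : 2 * I * (I/a) = 2 * I^2 / a := by ring
    rw [h3] at h
    have h4 : I^2/a - 2*I^2/a + b ≥ 0 := by linarith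
    have h5 : b ≥ I^2/a := by linarith [show I^2/a - 2*I^2/a = -(I^2/a) from by ring]
    calc I^2 = (I^2/a) * a := by field_simp
    _ ≤ b * a := mul_le_mul_of_nonneg_right h5 (le_of_lt ha0) |>.trans_eq rfl
    _ = a * b := by ring


lemma abs_moment_lower (q : ℕ) (hq : 1 ≤ q) :
    ((Real.exp (-2) / Real.sqrt (2*π)) * Real.sqrt q) ^ q ≤ ∫ t, |t|^q ∂(gaussianReal 0 1) := by
  have hqR : (1:ℝ) ≤ (q:ℝ) := by exact_mod_cast hq
  have hsq : (0:ℝ) ≤ Real.sqrt q := Real.sqrt_nonneg _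
  have h2π : (1:ℝ) ≤ Real.sqrt (2*π) := by
    rw [show (1:ℝ) = Real.sqrt 1 from (Real.sqrt_one).symm]
    apply Real.sqrt_le_sqrt
    nlinarith [pi_gt_three]
  have hpdf_nonneg := gaussianPDFReal_nonneg 0 1
  have hint : Integrable (fun t => |t|^q * gaussianPDFReal 0 1 t) volume :=
    integrable_gauss_iff.1 (integrable_abs_pow_gauss q)
  have heq : ∫ t, |t|^q ∂(gaussianReal 0 1) = ∫ t, |t|^q * gaussianPDFReal 0 1 t := by
    rw [integral_gauss]
    congr 1; ext t; ring
  set s : Set ℝ := Set.Icc (Real.sqrt q) (Real.sqrt q + 1) with hs_def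
  have hstep1 : ∫ t in s, |t|^q * gaussianPDFReal 0 1 t ≤ ∫ t, |t|^q * gaussianPDFReal 0 1 t :=
    setIntegral_le_integral hint (Filter.Eventually.of_forall fun t =>
      mul_nonneg (pow_nonneg (abs_nonneg t) q) (hpdf_nonneg t))
  have hconst : ∫ t in s, (Real.sqrt q)^q * gaussianPDFReal 0 1 (Real.sqrt q + 1)
      = (Real.sqrt q)^q * gaussianPDFReal 0 1 (Real.sqrt q + 1) := by
    rw [setIntegral_const, hs_def, Real.volume_real_Icc]
    rw [show (Real.sqrt q + 1 - Real.sqrt q) = 1 by ring]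
    simp
  have hstep2 : (Real.sqrt q)^q * gaussianPDFReal 0 1 (Real.sqrt q + 1)
      ≤ ∫ t in s, |t|^q * gaussianPDFReal 0 1 t := by
    rw [← hconst]
    refine setIntegral_mono_on (integrableOn_const ?_) hint.integrableOn
      measurableSet_Icc fun t ht => ?_
    · rw [hs_def, Real.volume_Icc]; exact ENNReal.ofReal_ne_top
    · obtain ⟨ht1, ht2⟩ := ht
      have htpos : 0 ≤ t := le_trans hsq ht1
      have h1 : (Real.sqrt q)^q ≤ |t|^q := by
        rw [abs_of_nonneg htpos]
        exact pow_le_pow_left₀ hsq ht1 q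
      have h2 : gaussianPDFReal 0 1 (Real.sqrt q + 1) ≤ gaussianPDFReal 0 1 t := by
        rw [pdf_eq, pdf_eq]
        apply mul_le_mul_of_nonneg_left _ (by positivity)
        apply Real.exp_le_exp.2
        nlinarith [pow_le_pow_left₀ htpos ht2 2]
      exact mul_le_mul h1 h2 (hpdf_nonneg _) (pow_nonneg (abs_nonneg t) q)
  have hfinal : ((Real.exp (-2) / Real.sqrt (2*π)) * Real.sqrt q) ^ q
      ≤ (Real.sqrt q)^q * gaussianPDFReal 0 1 (Real.sqrt q + 1) := by
    rw [mul_pow, pdf_eq]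
    rw [show ((Real.exp (-2) / Real.sqrt (2*π))^q) = (Real.exp (-2))^q * ((Real.sqrt (2*π))⁻¹)^q
      from by rw [div_eq_mul_inv, mul_pow]]
    have hA : (Real.exp (-2))^q ≤ rexp (-(1/2) * (Real.sqrt q + 1)^2) := by
      rw [← Real.exp_nat_mul]
      apply Real.exp_le_exp.2
      have hsqq : Real.sqrt q ≤ q := by
        nlinarith [Real.sq_sqrt (le_trans zero_le_one hqR), hsq]
      have hss : (Real.sqrt q)^2 = (q:ℝ) := Real.sq_sqrt (le_trans zero_le_one hqR)
      nlinarith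
    have hB : ((Real.sqrt (2*π))⁻¹)^q ≤ (Real.sqrt (2*π))⁻¹ := by
      rw [show ((Real.sqrt (2*π))⁻¹) = ((Real.sqrt (2*π))⁻¹)^1 from (pow_one _).symm]
      rw [← pow_mul]
      simp only [one_mul]
      exact pow_le_pow_of_le_one (by positivity) (inv_le_one_of_one_le₀ h2π) hq
    calc (Real.exp (-2))^q * ((Real.sqrt (2*π))⁻¹)^q * (Real.sqrt q)^q
        ≤ rexp (-(1/2) * (Real.sqrt q + 1)^2) * (Real.sqrt (2*π))⁻¹ * (Real.sqrt q)^q := by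
          apply mul_le_mul_of_nonneg_right _ (pow_nonneg hsq q)
          exact mul_le_mul hA hB (by positivity) (Real.exp_nonneg _)
      _ = (Real.sqrt q)^q * ((Real.sqrt (2*π))⁻¹ * rexp (-(1/2) * (Real.sqrt q + 1)^2)) := by
          ring
  rw [heq]
  exact le_trans hfinal (le_trans hstep2 hstep1)


lemma measurable_sumsq {d : ℕ} : Measurable (fun y : Fin d → ℝ => ∑ i, (y i)^2) :=
  Finset.measurable_sum Finset.univ (fun i _ => (measurable_pi_apply i).pow_const 2)

lemma sum_sq_moment {d m : ℕ} (hd : 0 < d) (hm : 1 ≤ m) (hmd : 2*m ≤ d) :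
    Integrable (fun y : Fin d → ℝ => (∑ i, (y i)^2)^m) (stdGaussian d) ∧
    ∫ y, (∑ i, (y i)^2)^m ∂(stdGaussian d) ≤ (2 * rexp 1 * d)^m := by
  have hdR : (0:ℝ) < d := by exact_mod_cast hd
  have hmR : (1:ℝ) ≤ m := by exact_mod_cast hm
  have hmR0 : (0:ℝ) < m := by linarith
  have hmdR : 2*(m:ℝ) ≤ d := by exact_mod_cast hmd
  set l : ℝ := m / (2*d) with hl_def
  have hl0 : 0 < l := by positivity
  have hl4 : l ≤ 1/4 := by
    rw [hl_def, div_le_iff₀ (by linarith)]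
    linarith
  have hl2 : l < 1/2 := by linarith
  have hprod : ∀ y : Fin d → ℝ, rexp (l * ∑ i, (y i)^2) = ∏ i, rexp (l * (y i)^2) := by
    intro y
    rw [Finset.mul_sum, Real.exp_sum]
  have hintE : Integrable (fun y : Fin d → ℝ => rexp (l * ∑ i, (y i)^2)) (stdGaussian d) := by
    simp_rw [hprod]
    exact integrable_pi_prod (fun _ t => rexp (l * t^2)) (fun _ => integrable_exp_gauss hl2)
  have hE : ∫ y, rexp (l * ∑ i, (y i)^2) ∂(stdGaussian d) = (Real.sqrt (1/(1-2*l)))^d := by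
    simp_rw [hprod]
    rw [integral_pi_prod (fun _ t => rexp (l * t^2))]
    simp_rw [integral_exp_gauss hl2]
    rw [Finset.prod_const, Finset.card_univ, Fintype.card_fin]
  have hpt : ∀ y : Fin d → ℝ, (∑ i, (y i)^2)^m
      ≤ ((m.factorial : ℝ) * (l⁻¹)^m) * rexp (l * ∑ i, (y i)^2) := by
    intro y
    set X := ∑ i, (y i)^2 with hX_def
    have hX0 : 0 ≤ X := Finset.sum_nonneg fun i _ => sq_nonneg _
    have hb : (l*X)^m ≤ (m.factorial : ℝ) * rexp (l*X) := by
      have h2 : (l*X)^m / (m.factorial : ℝ) ≤ rexp (l*X) :=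
        le_trans (Finset.single_le_sum (f := fun i => (l*X)^i / (i.factorial : ℝ))
          (fun i _ => by positivity) (Finset.self_mem_range_succ m))
          (Real.sum_le_exp_of_nonneg (by positivity) (m+1))
      have h3 : (0:ℝ) < (m.factorial : ℝ) := by positivity
      calc (l*X)^m = (l*X)^m / (m.factorial : ℝ) * (m.factorial : ℝ) := by field_simp
      _ ≤ rexp (l*X) * (m.factorial : ℝ) := mul_le_mul_of_nonneg_right h2 (le_of_lt h3)
      _ = (m.factorial : ℝ) * rexp (l*X) := by ring
    have hXm : X^m = (l*X)^m * (l⁻¹)^m := by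
      rw [← mul_pow]
      congr 1
      field_simp
    rw [hXm]
    calc (l*X)^m * (l⁻¹)^m ≤ ((m.factorial : ℝ) * rexp (l*X)) * (l⁻¹)^m :=
      mul_le_mul_of_nonneg_right hb (by positivity)
    _ = ((m.factorial : ℝ) * (l⁻¹)^m) * rexp (l*X) := by ring
  have hXm_meas : Measurable (fun y : Fin d → ℝ => (∑ i, (y i)^2)^m) :=
    measurable_sumsq.pow_const m
  have hXm_int : Integrable (fun y : Fin d → ℝ => (∑ i, (y i)^2)^m) (stdGaussian d) := by
    refine Integrable.mono' (hintE.const_mul ((m.factorial : ℝ) * (l⁻¹)^m))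
      hXm_meas.aestronglyMeasurable (Filter.Eventually.of_forall fun y => ?_)
    rw [Real.norm_eq_abs, abs_of_nonneg (pow_nonneg (Finset.sum_nonneg fun i _ => sq_nonneg _) m)]
    exact hpt y
  refine ⟨hXm_int, ?_⟩
  have hint_le : ∫ y, (∑ i, (y i)^2)^m ∂(stdGaussian d)
      ≤ ((m.factorial : ℝ) * (l⁻¹)^m) * (Real.sqrt (1/(1-2*l)))^d := by
    rw [← hE, ← integral_const_mul]
    exact integral_mono hXm_int (hintE.const_mul _) hpt
  refine le_trans hint_le ?_
  set u : ℝ := m/d with hu_def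
  have hu0 : 0 < u := by positivity
  have hu2 : u ≤ 1/2 := by rw [hu_def, div_le_iff₀ hdR]; linarith
  have hul : 2*l = u := by rw [hl_def, hu_def]; field_simp
  have ha : rexp (-(2*u)) ≤ 1 - u := by
    rw [Real.exp_neg]
    nlinarith [inv_mul_cancel₀ (ne_of_gt (Real.exp_pos (2*u))),
      inv_nonneg.2 (le_of_lt (Real.exp_pos (2*u))), Real.add_one_le_exp (2*u)]
  have hinv : 1/(1-u) ≤ rexp (2*u) := by
    rw [div_le_iff₀ (by linarith)]
    rw [Real.exp_neg] at ha
    nlinarith [Real.exp_pos (2*u), inv_mul_cancel₀ (ne_of_gt (Real.exp_pos (2*u)))]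
  have hsq : Real.sqrt (1/(1-2*l)) ≤ rexp u := by
    rw [hul]
    have hexp2 : (rexp u)^2 = rexp (2*u) := by
      rw [sq, ← Real.exp_add]; ring_nf
    calc Real.sqrt (1/(1-u)) ≤ Real.sqrt ((rexp u)^2) :=
      Real.sqrt_le_sqrt (by rw [hexp2]; exact hinv)
    _ = rexp u := Real.sqrt_sq (le_of_lt (Real.exp_pos u))
  have hsqd : (Real.sqrt (1/(1-2*l)))^d ≤ rexp m := by
    calc (Real.sqrt (1/(1-2*l)))^d ≤ (rexp u)^d :=
      pow_le_pow_left₀ (Real.sqrt_nonneg _) hsq d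
    _ = rexp (d*u) := (Real.exp_nat_mul u d).symm
    _ = rexp m := by rw [hu_def]; congr 1; field_simp
  have hfac : (m.factorial : ℝ) * (l⁻¹)^m ≤ (2*(d:ℝ))^m := by
    have h1 : (m.factorial : ℝ) ≤ (m:ℝ)^m := by exact_mod_cast Nat.factorial_le_pow m
    have h2 : l⁻¹ = 2*(d:ℝ)/m := by rw [hl_def]; field_simp
    calc (m.factorial : ℝ) * (l⁻¹)^m ≤ (m:ℝ)^m * (l⁻¹)^m :=
      mul_le_mul_of_nonneg_right h1 (by positivity)
    _ = ((m:ℝ) * (2*(d:ℝ)/m))^m := by rw [h2, mul_pow]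
    _ = (2*(d:ℝ))^m := by congr 1; field_simp
  calc (m.factorial : ℝ) * (l⁻¹)^m * (Real.sqrt (1/(1-2*l)))^d ≤ (2*(d:ℝ))^m * rexp m :=
    mul_le_mul hfac hsqd (by positivity) (by positivity)
  _ = (2 * rexp 1 * d)^m := by
    rw [show rexp (m:ℝ) = rexp 1 ^ m from by rw [← Real.exp_nat_mul]; ring_nf, ← mul_pow]
    ring_nf

lemma wsq_bound {d : ℕ} (hd : 0 < d) (i0 : Fin d) :
    ∫ y, (y i0 / Real.sqrt (∑ i, (y i)^2))^2 ∂(stdGaussian d) ≤ 45/d := by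
  have hdR : (0:ℝ) < d := by exact_mod_cast hd
  set D : (Fin d → ℝ) → ℝ :=
    fun y => (4/d) * (y i0)^2 + rexp (d/8) * ∏ i, rexp (-(1/2) * (y i)^2) with hD_def
  have hpt : ∀ y : Fin d → ℝ, (y i0 / Real.sqrt (∑ i, (y i)^2))^2 ≤ D y := by
    intro y
    set X := ∑ i, (y i)^2 with hX_def
    have hX0 : 0 ≤ X := Finset.sum_nonneg fun i _ => sq_nonneg _
    have hXi : (y i0)^2 ≤ X := Finset.single_le_sum (fun i _ => sq_nonneg (y i))
      (Finset.mem_univ i0)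
    have hW : (y i0 / Real.sqrt X)^2 = (y i0)^2 / X := by
      rw [div_pow, Real.sq_sqrt hX0]
    have hT : rexp ((d:ℝ)/8) * ∏ i, rexp (-(1/2) * (y i)^2) = rexp ((d:ℝ)/8 - X/2) := by
      rw [← Real.exp_sum, ← Real.exp_add]
      congr 1
      rw [show (∑ i, -(1/2) * (y i)^2) = -(1/2) * X from by rw [hX_def, Finset.mul_sum]]
      ring
    show (y i0 / Real.sqrt X)^2 ≤ 4/(d:ℝ) * (y i0)^2
      + rexp ((d:ℝ)/8) * ∏ i, rexp (-(1/2) * (y i)^2)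
    rw [hW, hT]
    rcases le_or_gt ((d:ℝ)/4) X with hc | hc
    · have hX0' : (0:ℝ) < X := lt_of_lt_of_le (by positivity) hc
      have h1 : (y i0)^2 / X ≤ (y i0)^2 / ((d:ℝ)/4) :=
        div_le_div_of_nonneg_left (sq_nonneg _) (by positivity) hc
      have h2 : (y i0)^2 / ((d:ℝ)/4) = (4/(d:ℝ)) * (y i0)^2 := by field_simp
      have h3 : 0 ≤ rexp ((d:ℝ)/8 - X/2) := le_of_lt (Real.exp_pos _)
      linarith
    · have h1 : (y i0)^2 / X ≤ 1 := by
        rcases eq_or_lt_of_le hX0 with h0 | h0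
        · rw [← h0]
          simp
        · exact div_le_one_of_le₀ hXi (le_of_lt h0) |>.trans (le_refl 1)
      have h2 : (1:ℝ) ≤ rexp ((d:ℝ)/8 - X/2) := by
        rw [show (1:ℝ) = rexp 0 from (Real.exp_zero).symm]
        apply Real.exp_le_exp.2
        linarith
      have h3 : 0 ≤ (4/(d:ℝ)) * (y i0)^2 := by positivity
      linarith
  have hint1 : Integrable (fun y : Fin d → ℝ => (4/(d:ℝ)) * (y i0)^2) (stdGaussian d) :=
    (integrable_pi_coord i0 (fun t => t^2) integrable_sq_gauss).const_mul _
  have hint2 : Integrable (fun y : Fin d → ℝ =>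
      rexp ((d:ℝ)/8) * ∏ i, rexp (-(1/2) * (y i)^2)) (stdGaussian d) :=
    (integrable_pi_prod (fun _ t => rexp (-(1/2) * t^2))
      (fun _ => integrable_exp_gauss (by norm_num))).const_mul _
  have hD_int : Integrable D (stdGaussian d) := hint1.add hint2
  have hmono : ∫ y, (y i0 / Real.sqrt (∑ i, (y i)^2))^2 ∂(stdGaussian d)
      ≤ ∫ y, D y ∂(stdGaussian d) :=
    integral_mono_of_nonneg (Filter.Eventually.of_forall fun y => sq_nonneg _) hD_int
      (Filter.Eventually.of_forall hpt)
  refine le_trans hmono ?_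
  rw [hD_def, integral_add hint1 hint2, integral_const_mul, integral_const_mul,
    integral_pi_coord i0 (fun t => t^2), integral_pi_prod (fun _ t => rexp (-(1/2) * t^2))]
  simp_rw [integral_exp_gauss (show (-(1/2) : ℝ) < 1/2 by norm_num)]
  rw [Finset.prod_const, Finset.card_univ, Fintype.card_fin]
  have h1 : (4/(d:ℝ)) * ∫ t, t^2 ∂(gaussianReal 0 1) ≤ 40/d := by
    have := integral_sq_gauss_le
    rw [div_mul_eq_mul_div, div_le_div_iff₀ hdR hdR]
    nlinarith [integral_nonneg (μ := gaussianReal 0 1) (f := fun t : ℝ => t^2) (fun t : ℝ => sq_nonneg t)]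
  have h2 : rexp ((d:ℝ)/8) * (Real.sqrt (1/(1-2*(-(1/2)))))^d ≤ 5/d := by
    have hs : Real.sqrt (1/(1-2*(-(1/2)))) = Real.sqrt (1/2) := by norm_num
    rw [hs, show rexp ((d:ℝ)/8) = (rexp (1/8))^d from by rw [← Real.exp_nat_mul]; ring_nf,
      ← mul_pow]
    have hb : rexp (1/8) * Real.sqrt (1/2) ≤ 5/6 := by
      have he : rexp (1/8) ≤ 8/7 := by
        have h3 := Real.add_one_le_exp (-(1/8) : ℝ)
        rw [Real.exp_neg] at h3
        nlinarith [Real.exp_pos (1/8 : ℝ), inv_mul_cancel₀ (ne_of_gt (Real.exp_pos (1/8 : ℝ)))]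
      have hsq2 : Real.sqrt (1/2) ≤ 35/48 := by
        rw [show (35/48 : ℝ) = Real.sqrt ((35/48)^2) from
          (Real.sqrt_sq (by norm_num)).symm]
        apply Real.sqrt_le_sqrt
        norm_num
      calc rexp (1/8) * Real.sqrt (1/2) ≤ (8/7) * (35/48) :=
        mul_le_mul he hsq2 (Real.sqrt_nonneg _) (by norm_num)
      _ = 5/6 := by norm_num
    have hbn : (0:ℝ) ≤ rexp (1/8) * Real.sqrt (1/2) := by positivity
    calc (rexp (1/8) * Real.sqrt (1/2))^d ≤ (5/6 : ℝ)^d := pow_le_pow_left₀ hbn hb d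
    _ ≤ 5/d := by
      have hber : (1:ℝ) + d * (1/5) ≤ (1 + 1/5)^d := one_add_mul_le_pow (by norm_num) d
      have h65 : ((6/5 : ℝ))^d = (1 + 1/5)^d := by norm_num
      have hpos : (0:ℝ) < (6/5 : ℝ)^d := by positivity
      have h56 : (5/6 : ℝ)^d = ((6/5 : ℝ)^d)⁻¹ := by
        rw [← inv_pow]
        norm_num
      rw [h56, inv_le_comm₀ hpos (by positivity), show ((5:ℝ)/(d:ℝ))⁻¹ = (d:ℝ)/5 from inv_div _ _,
        h65]
      linarith
  have h3 : (40:ℝ)/d + 5/d = 45/d := by ring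
  linarith



lemma quadform_bounds {d : ℕ} {St : Matrix (Fin d) (Fin d) ℝ} {c C : ℝ}
    (h1 : (St - c • 1).PosSemidef) (h2 : (C • (1 : Matrix (Fin d) (Fin d) ℝ) - St).PosSemidef)
    (z : Fin d → ℝ) :
    c * (∑ j, (z j)^2) ≤ St.mulVec z ⬝ᵥ z ∧ St.mulVec z ⬝ᵥ z ≤ C * (∑ j, (z j)^2) := by
  have k1 := h1.dotProduct_mulVec_nonneg z
  have k2 := h2.dotProduct_mulVec_nonneg z
  have e1 : ∀ (M : Matrix (Fin d) (Fin d) ℝ), star z ⬝ᵥ M.mulVec z = M.mulVec z ⬝ᵥ z := by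
    intro M
    simp [dotProduct, mul_comm]
  rw [e1] at k1 k2
  have e2 : ∀ a : ℝ, (a • (1 : Matrix (Fin d) (Fin d) ℝ)).mulVec z ⬝ᵥ z = a * ∑ j, (z j)^2 := by
    intro a
    rw [Matrix.smul_mulVec, Matrix.one_mulVec, smul_dotProduct, smul_eq_mul]
    congr 1
    simp [dotProduct, sq]
  rw [Matrix.sub_mulVec, sub_dotProduct, e2] at k1 k2
  constructor <;> linarith

set_option maxHeartbeats 1600000

/-- sub-Gaussian moments of the radial part and of the norm
of a sub-exponential elliptical distribution. -/
theorem subexponential_elliptical_moments :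
    ∀ c C CSE : ℝ, 0 < c → 0 < C → 0 < CSE →
      ∃ C' : ℝ, 0 < C' ∧
        ∀ (d : ℕ) (St : Matrix (Fin d) (Fin d) ℝ) (ν : Measure ℝ),
          IsProbabilityMeasure ν → ν {t : ℝ | t ≤ 0} = 0 →
          St.PosDef → (St - c • 1).PosSemidef → (C • 1 - St).PosSemidef →
          (let x : ℝ × (Fin d → ℝ) → Fin d → ℝ := fun ω => fun i =>
             ω.1 * ((matSqrt St).mulVec
               (fun j => ω.2 j / Real.sqrt (∑ k, (ω.2 k) ^ 2))) i
           let μ := ν.prod (stdGaussian d)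
           (∀ (u : Fin d → ℝ) (p : ℕ), Even p → 0 < p →
              (∫ ω, (∑ i, u i * x ω i) ^ p ∂μ) ^ ((p : ℝ)⁻¹)
                ≤ CSE * (p : ℝ) *
                  Real.sqrt (∫ ω, (∑ i, u i * x ω i) ^ 2 ∂μ)) →
           ∀ p : ℕ, Even p → 0 < p → p ≤ d →
             ((∫ t, t ^ p ∂ν) ^ ((p : ℝ)⁻¹)
                ≤ C' * Real.sqrt p * Real.sqrt (∫ t, t ^ 2 ∂ν)) ∧
             ((∫ ω, (Real.sqrt (∑ i, (x ω i) ^ 2)) ^ p ∂μ) ^ ((p : ℝ)⁻¹)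
                ≤ C' * Real.sqrt p *
                  Real.sqrt (∫ ω, (∑ i, (x ω i) ^ 2) ∂μ))) := by
  intro c C CSE hc hC hCSE
  set c1 : ℝ := rexp (-2) / Real.sqrt (2*π) with hc1_def
  have hc1 : 0 < c1 := by positivity
  set c3 : ℝ := c1 / (2 * Real.sqrt (rexp 1)) with hc3_def
  have hc3 : 0 < c3 := by positivity
  set K1 : ℝ := CSE * Real.sqrt 45 / c3 with hK1_def
  have hK1 : 0 < K1 := by positivity
  refine ⟨K1 * (1 + Real.sqrt (C/c)), by positivity, ?_⟩
  intro d St ν hνprob hνpos hSt hStc hStC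
  haveI := hνprob
  intro x μ hsub p hpe hp0 hpd
  obtain ⟨m, hm2⟩ : ∃ m, p = 2*m := by
    obtain ⟨m, hm⟩ := hpe; exact ⟨m, by omega⟩
  have hm1 : 1 ≤ m := by omega
  have hmd : 2*m ≤ d := by omega
  have hd : 0 < d := by omega
  have hdR : (0:ℝ) < d := by exact_mod_cast hd
  have hpR : (0:ℝ) < p := by exact_mod_cast hp0
  have hmRnat : (0:ℝ) < m := by exact_mod_cast (by omega : 0 < m)
  set i0 : Fin d := ⟨0, hd⟩
  -- matrix facts
  have hpsd : St.PosSemidef := hSt.posSemidef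
  set S : Matrix (Fin d) (Fin d) ℝ := matSqrt St with hS_def
  have hSdef : S = (hpsd.1.eigenvectorUnitary : Matrix (Fin d) (Fin d) ℝ) *
      diagonal ((↑) ∘ (Real.sqrt ·) ∘ hpsd.1.eigenvalues) *
      (star hpsd.1.eigenvectorUnitary : Matrix (Fin d) (Fin d) ℝ) := by
    rw [hS_def, matSqrt, dif_pos hpsd]
  have hSS : S * S = St := by
    have hU : (star hpsd.1.eigenvectorUnitary : Matrix (Fin d) (Fin d) ℝ) *
        (hpsd.1.eigenvectorUnitary : Matrix (Fin d) (Fin d) ℝ) = 1 := Unitary.coe_star_mul_self _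
    have hD : (diagonal ((↑) ∘ (Real.sqrt ·) ∘ hpsd.1.eigenvalues) : Matrix (Fin d) (Fin d) ℝ) *
        (diagonal ((↑) ∘ (Real.sqrt ·) ∘ hpsd.1.eigenvalues) : Matrix (Fin d) (Fin d) ℝ)
        = diagonal (RCLike.ofReal ∘ hpsd.1.eigenvalues) := by
      rw [diagonal_mul_diagonal]
      congr 1; funext i
      simp [Real.mul_self_sqrt (hpsd.eigenvalues_nonneg i)]
    conv_rhs => rw [hpsd.1.spectral_theorem, Unitary.conjStarAlgAut_apply]
    rw [hSdef, ← hD]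
    simp only [Matrix.mul_assoc]
    rw [← Matrix.mul_assoc _ _ (diagonal _ * _), hU, Matrix.one_mul]
  have hSsym : Sᵀ = S := by
    rw [hSdef, Matrix.transpose_mul, Matrix.transpose_mul, diagonal_transpose,
      Matrix.star_eq_conjTranspose, conjTranspose_eq_transpose_of_trivial, Matrix.transpose_transpose,
      Matrix.mul_assoc]
  have hdet : IsUnit S.det := by
    rw [isUnit_iff_ne_zero]
    intro h0
    have h1 := hSt.det_pos
    rw [← hSS, Matrix.det_mul, h0, mul_zero] at h1
    exact lt_irrefl _ h1
  -- vector functions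
  set v : (Fin d → ℝ) → (Fin d → ℝ) :=
    fun y => fun j => y j / Real.sqrt (∑ k, (y k)^2) with hv_def
  set W : (Fin d → ℝ) → ℝ := fun y => y i0 / Real.sqrt (∑ k, (y k)^2) with hW_def
  set Qf : (Fin d → ℝ) → ℝ := fun y => St.mulVec (v y) ⬝ᵥ (v y) with hQf_def
  set u : Fin d → ℝ := S⁻¹.mulVec (Pi.single i0 1) with hu_def
  have hSu : S.mulVec u = Pi.single i0 1 := by
    rw [hu_def, Matrix.mulVec_mulVec, Matrix.mul_nonsing_inv _ hdet, Matrix.one_mulVec]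
  have hkey1 : ∀ ω : ℝ × (Fin d → ℝ), (∑ i, u i * x ω i) = ω.1 * W ω.2 := by
    intro ω
    show (∑ i, u i * (ω.1 * (S.mulVec (v ω.2)) i)) = ω.1 * W ω.2
    rw [show (∑ i, u i * (ω.1 * (S.mulVec (v ω.2)) i))
        = ω.1 * (∑ i, u i * (S.mulVec (v ω.2)) i) from by
      rw [Finset.mul_sum]; congr 1; ext i; ring]
    congr 1
    have h1 : (∑ i, u i * (S.mulVec (v ω.2)) i) = u ⬝ᵥ (S.mulVec (v ω.2)) := rfl
    rw [h1, Matrix.dotProduct_mulVec, ← hSsym, Matrix.vecMul_transpose, hSu,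
      single_dotProduct, one_mul]
  have hkey2 : ∀ ω : ℝ × (Fin d → ℝ), (∑ i, (x ω i)^2) = ω.1^2 * Qf ω.2 := by
    intro ω
    show (∑ i, (ω.1 * (S.mulVec (v ω.2)) i)^2) = ω.1^2 * Qf ω.2
    rw [show (∑ i, (ω.1 * (S.mulVec (v ω.2)) i)^2)
        = ω.1^2 * (∑ i, (S.mulVec (v ω.2)) i * (S.mulVec (v ω.2)) i) from by
      rw [Finset.mul_sum]; congr 1; ext i; ring]
    congr 1
    have h1 : (∑ i, (S.mulVec (v ω.2)) i * (S.mulVec (v ω.2)) i)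
        = (S.mulVec (v ω.2)) ⬝ᵥ (S.mulVec (v ω.2)) := rfl
    rw [h1, Matrix.dotProduct_mulVec, ← hSsym, Matrix.vecMul_transpose, hSsym,
      Matrix.mulVec_mulVec, hSS, hQf_def]
  -- quadratic form bounds and norm of v
  have hQlb : ∀ y, c * (∑ j, (v y j)^2) ≤ Qf y := fun y => (quadform_bounds hStc hStC (v y)).1
  have hQub : ∀ y, Qf y ≤ C * (∑ j, (v y j)^2) := fun y => (quadform_bounds hStc hStC (v y)).2
  have hv1 : ∀ y : Fin d → ℝ, (∑ j, (v y j)^2)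
      = if (∑ k, (y k)^2) = 0 then 0 else 1 := by
    intro y
    have hX0 : 0 ≤ ∑ k, (y k)^2 := Finset.sum_nonneg fun k _ => sq_nonneg _
    by_cases h0 : (∑ k, (y k)^2) = 0
    · rw [if_pos h0]
      show (∑ j, (y j / Real.sqrt (∑ k, (y k)^2))^2) = 0
      simp only [h0, Real.sqrt_zero, div_zero]
      simp
    · rw [if_neg h0]
      show (∑ j, (y j / Real.sqrt (∑ k, (y k)^2))^2) = 1
      have hXpos : 0 < ∑ k, (y k)^2 := lt_of_le_of_ne hX0 (Ne.symm h0)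
      have : ∀ j, (y j / Real.sqrt (∑ k, (y k)^2))^2 = (y j)^2 / (∑ k, (y k)^2) := by
        intro j
        rw [div_pow, Real.sq_sqrt hX0]
      simp_rw [this]
      rw [← Finset.sum_div, div_self (ne_of_gt hXpos)]
  have hvle : ∀ y : Fin d → ℝ, (∑ j, (v y j)^2) ≤ 1 := by
    intro y
    rw [hv1 y]
    split <;> norm_num
  have hQub' : ∀ y, Qf y ≤ C := by
    intro y
    refine le_trans (hQub y) ?_
    nlinarith [hvle y, Finset.sum_nonneg (fun j (_ : j ∈ Finset.univ) => sq_nonneg (v y j))]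
  have hQlb0 : ∀ y, 0 ≤ Qf y := by
    intro y
    refine le_trans ?_ (hQlb y)
    have := Finset.sum_nonneg (fun j (_ : j ∈ Finset.univ) => sq_nonneg (v y j))
    positivity
  -- basic integrals
  set A : ℝ := ∫ t, t^p ∂ν with hA_def
  set T2 : ℝ := ∫ t, t^2 ∂ν with hT2_def
  set B : ℝ := ∫ y, (W y)^p ∂(stdGaussian d) with hB_def
  have hA0 : 0 ≤ A := integral_nonneg fun t => hpe.pow_nonneg t
  have hT20 : 0 ≤ T2 := integral_nonneg fun t => sq_nonneg t
  have hB0 : 0 ≤ B := integral_nonneg fun y => hpe.pow_nonneg _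
  have hEp : ∫ ω, (ω.1 * W ω.2)^p ∂μ = A * B := by
    simp_rw [mul_pow]
    exact integral_prod_mul (f := fun t : ℝ => t^p) (g := fun y => (W y)^p)
  have hE2 : ∫ ω, (ω.1 * W ω.2)^2 ∂μ = T2 * ∫ y, (W y)^2 ∂(stdGaussian d) := by
    simp_rw [mul_pow]
    exact integral_prod_mul (f := fun t : ℝ => t^2) (g := fun y => (W y)^2)
  have hW2b : ∫ y, (W y)^2 ∂(stdGaussian d) ≤ 45/d := wsq_bound hd i0
  have hW20 : 0 ≤ ∫ y, (W y)^2 ∂(stdGaussian d) := integral_nonneg fun y => sq_nonneg _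
  -- lower bound on B
  have hB_lb : (c3 * Real.sqrt ((p:ℝ)/d))^p ≤ B := by
    have hWmeas : Measurable W := (measurable_pi_apply i0).div measurable_sumsq.sqrt
    set F : (Fin d → ℝ) → ℝ := fun y => |W y|^m with hF_def
    set G : (Fin d → ℝ) → ℝ := fun y => (Real.sqrt (∑ k, (y k)^2))^m with hG_def
    have hXnn : ∀ y : Fin d → ℝ, 0 ≤ ∑ k, (y k)^2 :=
      fun y => Finset.sum_nonneg fun k _ => sq_nonneg _
    have hF2eq : ∀ y, F y^2 = (W y)^p := by
      intro y
      show (|W y|^m)^2 = (W y)^p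
      rw [← pow_mul, Even.pow_abs (⟨m, by omega⟩ : Even (m*2)), show m*2 = p from by omega]
    have hG2eq : ∀ y, G y^2 = (∑ k, (y k)^2)^m := by
      intro y
      show ((Real.sqrt (∑ k, (y k)^2))^m)^2 = (∑ k, (y k)^2)^m
      rw [← pow_mul, mul_comm m 2, pow_mul, Real.sq_sqrt (hXnn y)]
    have hFGeq : ∀ y, F y * G y = |y i0|^m := by
      intro y
      show (|W y|^m) * ((Real.sqrt (∑ k, (y k)^2))^m) = |y i0|^m
      rw [← mul_pow]
      congr 1
      show |y i0 / Real.sqrt (∑ k, (y k)^2)| * Real.sqrt (∑ k, (y k)^2) = |y i0|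
      rw [abs_div, abs_of_nonneg (Real.sqrt_nonneg _)]
      rcases eq_or_lt_of_le (hXnn y) with h0 | h0
      · have hs0 : Real.sqrt (∑ k, (y k)^2) = 0 := by rw [← h0, Real.sqrt_zero]
        have hy0 : y i0 = 0 := by
          have h1 := Finset.single_le_sum (fun k (_ : k ∈ Finset.univ) => sq_nonneg (y k))
            (Finset.mem_univ i0)
          have h4 : (y i0)^2 = 0 := le_antisymm (by linarith [h0, h1]) (sq_nonneg _)
          exact (pow_eq_zero_iff (by norm_num : (2:ℕ) ≠ 0)).1 h4
        rw [hs0, hy0]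
        simp
      · rw [div_mul_cancel₀ _ (ne_of_gt (Real.sqrt_pos.2 h0))]
    have hWle1 : ∀ y, |W y| ≤ 1 := by
      intro y
      show |y i0 / Real.sqrt (∑ k, (y k)^2)| ≤ 1
      rw [abs_div, abs_of_nonneg (Real.sqrt_nonneg _)]
      rcases eq_or_lt_of_le (hXnn y) with h0 | h0
      · rw [← h0, Real.sqrt_zero, div_zero]
        norm_num
      · rw [div_le_one (Real.sqrt_pos.2 h0)]
        rw [show |y i0| = Real.sqrt ((y i0)^2) from (Real.sqrt_sq_eq_abs _).symm]
        exact Real.sqrt_le_sqrt (Finset.single_le_sum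
          (fun k (_ : k ∈ Finset.univ) => sq_nonneg (y k)) (Finset.mem_univ i0))
    obtain ⟨hXm_int, hXm_le⟩ := sum_sq_moment (d := d) (m := m) hd hm1 hmd
    have hF2int : Integrable (fun y => F y^2) (stdGaussian d) := by
      refine Integrable.mono' (integrable_const 1)
        ((hWmeas.abs.pow_const m).pow_const 2).aestronglyMeasurable
        (Filter.Eventually.of_forall fun y => ?_)
      rw [Real.norm_eq_abs, abs_of_nonneg (sq_nonneg _)]
      show (|W y|^m)^2 ≤ 1
      rw [← pow_mul]
      exact pow_le_one₀ (abs_nonneg _) (hWle1 y)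
    have hG2int : Integrable (fun y => G y^2) (stdGaussian d) := by
      have he : (fun y => G y^2) = fun y : Fin d → ℝ => (∑ k, (y k)^2)^m := funext hG2eq
      rw [he]
      exact hXm_int
    have hCS := my_cauchy (stdGaussian d) F G (hWmeas.abs.pow_const m)
      (measurable_sumsq.sqrt.pow_const m)
      (fun y => pow_nonneg (abs_nonneg _) m) (fun y => pow_nonneg (Real.sqrt_nonneg _) m)
      hF2int hG2int
    have hint1 : ∫ y, F y * G y ∂(stdGaussian d) = ∫ t, |t|^m ∂(gaussianReal 0 1) := by
      simp_rw [hFGeq]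
      exact integral_pi_coord i0 (fun t => |t|^m)
    have hint2 : ∫ y, F y^2 ∂(stdGaussian d) = B := by
      simp_rw [hF2eq]
      rfl
    have hint3 : ∫ y, G y^2 ∂(stdGaussian d)
        = ∫ y, (∑ k, (y k)^2)^m ∂(stdGaussian d) := by
      simp_rw [hG2eq]
    rw [hint1, hint2, hint3] at hCS
    have hMm_lb : (c1 * Real.sqrt m)^m ≤ ∫ t, |t|^m ∂(gaussianReal 0 1) :=
      abs_moment_lower m hm1
    have hMm0 : 0 ≤ (c1 * Real.sqrt m)^m := by positivity
    have h1 : ((c1 * Real.sqrt m)^m)^2 ≤ B * (2 * rexp 1 * d)^m := by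
      calc ((c1 * Real.sqrt m)^m)^2 ≤ (∫ t, |t|^m ∂(gaussianReal 0 1))^2 :=
            pow_le_pow_left₀ hMm0 hMm_lb 2
        _ ≤ B * ∫ y, (∑ k, (y k)^2)^m ∂(stdGaussian d) := hCS
        _ ≤ B * (2 * rexp 1 * d)^m := mul_le_mul_of_nonneg_left hXm_le hB0
    have h2 : ((c1 * Real.sqrt m)^m)^2 = (c1^2 * m)^m := by
      rw [← pow_mul, mul_comm m 2, pow_mul]
      congr 1
      rw [mul_pow, Real.sq_sqrt (le_of_lt hmRnat)]
    have h3 : (c3 * Real.sqrt ((p:ℝ)/d))^p = ((c1^2*m) / (2 * rexp 1 * d))^m := by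
      have hpm : (p:ℝ) = 2*m := by exact_mod_cast hm2
      have hb : (c3 * Real.sqrt ((p:ℝ)/d))^2 = (c1^2*m)/(2 * rexp 1 * d) := by
        rw [mul_pow, Real.sq_sqrt (by positivity : (0:ℝ) ≤ (p:ℝ)/d), hc3_def, div_pow, mul_pow,
          Real.sq_sqrt (le_of_lt (Real.exp_pos 1)), hpm]
        have hexp1 : (0:ℝ) < rexp 1 := Real.exp_pos 1
        field_simp
      calc (c3 * Real.sqrt ((p:ℝ)/d))^p = ((c3 * Real.sqrt ((p:ℝ)/d))^2)^m := by
            rw [← pow_mul, ← hm2]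
        _ = ((c1^2*m) / (2 * rexp 1 * d))^m := by rw [hb]
    rw [h3, div_pow, div_le_iff₀ (by positivity)]
    calc (c1^2*m)^m = ((c1 * Real.sqrt m)^m)^2 := h2.symm
    _ ≤ B * (2 * rexp 1 * d)^m := h1
  -- part 1 key bound
  have hApart : A ^ ((p:ℝ)⁻¹) ≤ K1 * Real.sqrt p * Real.sqrt T2 := by
    have Hu := hsub u p hpe hp0
    simp_rw [hkey1] at Hu
    rw [hEp, hE2] at Hu
    have hABr : (A*B) ^ ((p:ℝ)⁻¹) = A ^ ((p:ℝ)⁻¹) * B ^ ((p:ℝ)⁻¹) := Real.mul_rpow hA0 hB0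
    set z : ℝ := c3 * Real.sqrt ((p:ℝ)/d) with hz_def
    have hz0 : 0 < z := by
      rw [hz_def]
      have h0 : 0 < Real.sqrt ((p:ℝ)/d) := Real.sqrt_pos.2 (by positivity)
      positivity
    have hpne : ((p:ℝ)) ≠ 0 := ne_of_gt hpR
    have hzB : z ≤ B ^ ((p:ℝ)⁻¹) := by
      have h1 : ((z^p : ℝ)) ^ ((p:ℝ)⁻¹) = z := by
        rw [← Real.rpow_natCast z p, ← Real.rpow_mul (le_of_lt hz0), mul_inv_cancel₀ hpne,
          Real.rpow_one]
      rw [← h1]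
      exact Real.rpow_le_rpow (pow_nonneg (le_of_lt hz0) p) hB_lb (by positivity)
    have hrhs : CSE * p * Real.sqrt (T2 * ∫ y, (W y)^2 ∂(stdGaussian d))
        ≤ CSE * p * (Real.sqrt T2 * (Real.sqrt 45 / Real.sqrt d)) := by
      apply mul_le_mul_of_nonneg_left _ (by positivity)
      calc Real.sqrt (T2 * ∫ y, (W y)^2 ∂(stdGaussian d)) ≤ Real.sqrt (T2 * (45/d)) :=
        Real.sqrt_le_sqrt (mul_le_mul_of_nonneg_left hW2b hT20)
      _ = Real.sqrt T2 * Real.sqrt (45/d) := Real.sqrt_mul hT20 _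
      _ = Real.sqrt T2 * (Real.sqrt 45 / Real.sqrt d) := by
          rw [Real.sqrt_div (by norm_num : (0:ℝ) ≤ 45)]
    have hchain : A ^ ((p:ℝ)⁻¹) * z
        ≤ CSE * p * (Real.sqrt T2 * (Real.sqrt 45 / Real.sqrt d)) := by
      calc A ^ ((p:ℝ)⁻¹) * z ≤ A ^ ((p:ℝ)⁻¹) * B ^ ((p:ℝ)⁻¹) :=
        mul_le_mul_of_nonneg_left hzB (Real.rpow_nonneg hA0 _)
      _ = (A*B) ^ ((p:ℝ)⁻¹) := hABr.symm
      _ ≤ CSE * p * Real.sqrt (T2 * ∫ y, (W y)^2 ∂(stdGaussian d)) := Hu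
      _ ≤ _ := hrhs
    have hsd : (0:ℝ) < Real.sqrt d := Real.sqrt_pos.2 hdR
    have hsp : (0:ℝ) < Real.sqrt p := Real.sqrt_pos.2 hpR
    have hzd : z = c3 * Real.sqrt p / Real.sqrt d := by
      rw [hz_def, Real.sqrt_div (le_of_lt hpR) d, mul_div_assoc]
    have h6 : A ^ ((p:ℝ)⁻¹) * (c3 * Real.sqrt p) ≤ CSE * p * Real.sqrt T2 * Real.sqrt 45 := by
      have h7 := mul_le_mul_of_nonneg_right hchain (le_of_lt hsd)
      rw [hzd] at h7
      have e1 : A ^ ((p:ℝ)⁻¹) * (c3 * Real.sqrt p / Real.sqrt d) * Real.sqrt d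
          = A ^ ((p:ℝ)⁻¹) * (c3 * Real.sqrt p) := by
        field_simp
      have e2 : CSE * p * (Real.sqrt T2 * (Real.sqrt 45 / Real.sqrt d)) * Real.sqrt d
          = CSE * p * Real.sqrt T2 * Real.sqrt 45 := by
        field_simp
      rw [e1, e2] at h7
      exact h7
    have hps : ((p:ℝ)) = Real.sqrt p * Real.sqrt p := (Real.mul_self_sqrt (le_of_lt hpR)).symm
    have hfrac : K1 * c3 = CSE * Real.sqrt 45 := by
      rw [hK1_def, div_mul_cancel₀ _ (ne_of_gt hc3)]
    rw [show K1 * Real.sqrt p * Real.sqrt T2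
        = (CSE * p * Real.sqrt T2 * Real.sqrt 45) / (c3 * Real.sqrt p) from by
      rw [eq_div_iff (by positivity : (c3 * Real.sqrt p) ≠ 0)]
      calc K1 * Real.sqrt p * Real.sqrt T2 * (c3 * Real.sqrt p)
          = (K1 * c3) * (Real.sqrt p * Real.sqrt p) * Real.sqrt T2 := by ring
        _ = (CSE * Real.sqrt 45) * ((p:ℝ)) * Real.sqrt T2 := by rw [hfrac, ← hps]
        _ = CSE * p * Real.sqrt T2 * Real.sqrt 45 := by ring]
    rw [le_div_iff₀ (by positivity)]
    exact h6
  constructor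
  · calc A ^ ((p:ℝ)⁻¹) ≤ K1 * Real.sqrt p * Real.sqrt T2 := hApart
    _ ≤ K1 * (1 + Real.sqrt (C/c)) * Real.sqrt p * Real.sqrt T2 := by
        have h1 : K1 ≤ K1 * (1 + Real.sqrt (C/c)) :=
          le_mul_of_one_le_right (le_of_lt hK1) (by linarith [Real.sqrt_nonneg (C/c)])
        have h2 : (0:ℝ) ≤ Real.sqrt p * Real.sqrt T2 := by positivity
        calc K1 * Real.sqrt p * Real.sqrt T2 = K1 * (Real.sqrt p * Real.sqrt T2) := by ring
          _ ≤ (K1 * (1 + Real.sqrt (C/c))) * (Real.sqrt p * Real.sqrt T2) :=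
              mul_le_mul_of_nonneg_right h1 h2
          _ = K1 * (1 + Real.sqrt (C/c)) * Real.sqrt p * Real.sqrt T2 := by ring
  · -- part 2
    have hxnorm : ∀ ω : ℝ × (Fin d → ℝ),
        (Real.sqrt (∑ i, (x ω i)^2))^p = (ω.1^2 * Qf ω.2)^m := by
      intro ω
      rw [hkey2 ω, hm2, pow_mul, Real.sq_sqrt (mul_nonneg (sq_nonneg _) (hQlb0 ω.2))]
    have hN : (stdGaussian d) {y : Fin d → ℝ | (∑ k, (y k)^2) = 0} = 0 := by
      have hγ0 : (gaussianReal 0 1) ({0} : Set ℝ) = 0 :=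
        gaussianReal_absolutelyContinuous 0 one_ne_zero (measure_singleton 0)
      refine measure_mono_null (fun y hy => ?_)
        (Measure.pi_eval_preimage_null (fun _ : Fin d => gaussianReal 0 1) (i := i0) hγ0)
      simp only [Set.mem_setOf_eq] at hy
      have h2 := Finset.single_le_sum (fun k (_ : k ∈ Finset.univ) => sq_nonneg (y k))
        (Finset.mem_univ i0)
      simp only [Set.mem_preimage, Set.mem_singleton_iff, Function.eval]
      nlinarith [sq_nonneg (y i0)]
    have hμN : μ {ω : ℝ × (Fin d → ℝ) | (∑ k, (ω.2 k)^2) = 0} = 0 := by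
      have he : {ω : ℝ × (Fin d → ℝ) | (∑ k, (ω.2 k)^2) = 0}
          = (Set.univ : Set ℝ) ×ˢ {y : Fin d → ℝ | (∑ k, (y k)^2) = 0} := by
        ext ω
        simp [Set.mem_prod]
      show (ν.prod (stdGaussian d)) _ = 0
      rw [he, Measure.prod_prod, hN, mul_zero]
    have main2 : ∫ ω, (Real.sqrt (∑ i, (x ω i)^2))^p ∂μ ≤ C^m * A := by
      simp_rw [hxnorm]
      by_cases hInt : Integrable (fun t : ℝ => t^p) ν
      · have hdom0 : Integrable (fun ω : ℝ × (Fin d → ℝ) =>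
            (fun t : ℝ => t^p) ω.1 * (fun _ : Fin d → ℝ => (1:ℝ)) ω.2) μ :=
          hInt.mul_prod (integrable_const 1)
        simp only [mul_one] at hdom0
        have hdom : Integrable (fun ω : ℝ × (Fin d → ℝ) => C^m * ω.1^p) μ := hdom0.const_mul _
        have hptw : ∀ ω : ℝ × (Fin d → ℝ), (ω.1^2 * Qf ω.2)^m ≤ C^m * ω.1^p := by
          intro ω
          have h1 : ω.1^2 * Qf ω.2 ≤ ω.1^2 * C :=
            mul_le_mul_of_nonneg_left (hQub' ω.2) (sq_nonneg _)
          calc (ω.1^2 * Qf ω.2)^m ≤ (ω.1^2 * C)^m :=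
            pow_le_pow_left₀ (mul_nonneg (sq_nonneg _) (hQlb0 ω.2)) h1 m
          _ = C^m * ω.1^p := by
              rw [mul_pow, show (ω.1^2)^m = ω.1^p from by rw [hm2, pow_mul]]
              ring
        have hEz : ∫ ω, (C^m * ω.1^p) ∂μ = C^m * A := by
          rw [integral_const_mul]
          congr 1
          have h2 := integral_prod_mul (μ := ν) (ν := stdGaussian d)
            (f := fun t : ℝ => t^p) (g := fun _ : Fin d → ℝ => (1:ℝ))
          simp only [mul_one, integral_const, measure_univ, probReal_univ, ENNReal.toReal_one, one_smul,
            smul_eq_mul] at h2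
          exact h2
        rw [← hEz]
        exact integral_mono_of_nonneg
          (Filter.Eventually.of_forall fun ω =>
            pow_nonneg (mul_nonneg (sq_nonneg _) (hQlb0 ω.2)) m)
          hdom (Filter.Eventually.of_forall hptw)
      · have hA0' : A = 0 := by rw [hA_def]; exact integral_undef hInt
        rw [hA0', mul_zero]
        have hae_lb : ∀ᵐ ω ∂μ, c^m * ω.1^p ≤ (ω.1^2 * Qf ω.2)^m := by
          rw [ae_iff]
          refine measure_mono_null (fun ω hω => ?_) hμN
          simp only [Set.mem_setOf_eq, not_le] at hω
          simp only [Set.mem_setOf_eq]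
          by_contra hne
          have hv2 : (∑ j, (v ω.2 j)^2) = 1 := (hv1 ω.2).trans (if_neg hne)
          have hcQ : c ≤ Qf ω.2 := by
            have h0 := hQlb ω.2
            rw [hv2, mul_one] at h0
            exact h0
          have h1 : c^m * ω.1^p = (c * ω.1^2)^m := by
            rw [mul_pow, show (ω.1^2)^m = ω.1^p from by rw [hm2, pow_mul]]
          have h2 : (c * ω.1^2)^m ≤ (ω.1^2 * Qf ω.2)^m := by
            apply pow_le_pow_left₀ (mul_nonneg (le_of_lt hc) (sq_nonneg _))
            calc c * ω.1^2 = ω.1^2 * c := by ring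
            _ ≤ ω.1^2 * Qf ω.2 := mul_le_mul_of_nonneg_left hcQ (sq_nonneg _)
          linarith
        have hnotint : ¬ Integrable (fun ω : ℝ × (Fin d → ℝ) => (ω.1^2 * Qf ω.2)^m) μ := by
          intro hcon
          apply hInt
          have hmeas1 : Measurable (fun ω : ℝ × (Fin d → ℝ) => c^m * ω.1^p) :=
            (measurable_fst.pow_const p).const_mul _
          have h1 : Integrable (fun ω : ℝ × (Fin d → ℝ) => c^m * ω.1^p) μ := by
            refine Integrable.mono' hcon hmeas1.aestronglyMeasurable ?_
            refine hae_lb.mono fun ω hω => ?_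
            rw [Real.norm_eq_abs, abs_of_nonneg
              (mul_nonneg (pow_nonneg (le_of_lt hc) m) (hpe.pow_nonneg _))]
            exact hω
          have h2 : Integrable (fun ω : ℝ × (Fin d → ℝ) => ω.1^p) μ := by
            have h3 := h1.const_mul ((c^m)⁻¹)
            refine h3.congr (Filter.Eventually.of_forall fun ω => ?_)
            have hcm : (c:ℝ)^m ≠ 0 := ne_of_gt (pow_pos hc m)
            field_simp
          have hmap : Measure.map Prod.fst μ = ν := by
            show Measure.map Prod.fst (ν.prod (stdGaussian d)) = ν
            rw [Measure.map_fst_prod]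
            simp
          rw [← hmap]
          exact (integrable_map_measure (measurable_id.pow_const p).aestronglyMeasurable
            measurable_fst.aemeasurable).2 h2
        rw [integral_undef hnotint]
    have hI2 : ∫ ω, (∑ i, (x ω i)^2) ∂μ = T2 * ∫ y, Qf y ∂(stdGaussian d) := by
      simp_rw [hkey2]
      exact integral_prod_mul (f := fun t : ℝ => t^2) (g := Qf)
    have hQf_meas : Measurable Qf := by
      have he : Qf = fun y => ∑ i, (∑ j, St i j * v y j) * v y i := by
        funext y
        rw [hQf_def]
        simp [Matrix.mulVec, dotProduct]
      rw [he]
      refine Finset.measurable_sum _ fun i _ => Measurable.mul ?_ ?_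
      · exact Finset.measurable_sum _ fun j _ =>
          measurable_const.mul ((measurable_pi_apply j).div measurable_sumsq.sqrt)
      · exact (measurable_pi_apply i).div measurable_sumsq.sqrt
    have hQf_int : Integrable Qf (stdGaussian d) := by
      refine Integrable.mono' (integrable_const C) hQf_meas.aestronglyMeasurable
        (Filter.Eventually.of_forall fun y => ?_)
      rw [Real.norm_eq_abs, abs_of_nonneg (hQlb0 y)]
      exact hQub' y
    have hvsum_ae : ∀ᵐ y ∂(stdGaussian d), (∑ j, (v y j)^2) = 1 := by
      rw [ae_iff]
      refine measure_mono_null (fun y hy => ?_) hN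
      simp only [Set.mem_setOf_eq] at hy ⊢
      by_contra hne
      exact hy ((hv1 y).trans (if_neg hne))
    have hEv : ∫ y, (∑ j, (v y j)^2) ∂(stdGaussian d) = 1 := by
      rw [integral_congr_ae (hvsum_ae.mono fun y hy => hy)]
      simp
    have hEQ_lb : c ≤ ∫ y, Qf y ∂(stdGaussian d) := by
      have h1 : ∫ y, c * (∑ j, (v y j)^2) ∂(stdGaussian d) ≤ ∫ y, Qf y ∂(stdGaussian d) :=
        integral_mono_of_nonneg
          (Filter.Eventually.of_forall fun y =>
            mul_nonneg (le_of_lt hc) (Finset.sum_nonneg fun j _ => sq_nonneg _))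
          hQf_int (Filter.Eventually.of_forall hQlb)
      rw [integral_const_mul, hEv, mul_one] at h1
      exact h1
    have hI2_lb : c * T2 ≤ ∫ ω, (∑ i, (x ω i)^2) ∂μ := by
      rw [hI2]
      calc c * T2 = T2 * c := by ring
      _ ≤ T2 * ∫ y, Qf y ∂(stdGaussian d) := mul_le_mul_of_nonneg_left hEQ_lb hT20
    have hLHS0 : 0 ≤ ∫ ω, (Real.sqrt (∑ i, (x ω i)^2))^p ∂μ :=
      integral_nonneg fun ω => pow_nonneg (Real.sqrt_nonneg _) p
    have hCm : ((C^m : ℝ)) ^ ((p:ℝ)⁻¹) = Real.sqrt C := by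
      have h1 : (C : ℝ)^m = (Real.sqrt C)^p := by
        rw [hm2, pow_mul, Real.sq_sqrt (le_of_lt hC)]
      rw [h1, ← Real.rpow_natCast (Real.sqrt C) p, ← Real.rpow_mul (Real.sqrt_nonneg C),
        mul_inv_cancel₀ (ne_of_gt hpR), Real.rpow_one]
    calc (∫ ω, (Real.sqrt (∑ i, (x ω i)^2))^p ∂μ) ^ ((p:ℝ)⁻¹)
        ≤ (C^m * A) ^ ((p:ℝ)⁻¹) := Real.rpow_le_rpow hLHS0 main2 (by positivity)
      _ = Real.sqrt C * A ^ ((p:ℝ)⁻¹) := by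
          rw [Real.mul_rpow (by positivity) hA0, hCm]
      _ ≤ Real.sqrt C * (K1 * Real.sqrt p * Real.sqrt T2) :=
          mul_le_mul_of_nonneg_left hApart (Real.sqrt_nonneg C)
      _ ≤ K1 * (1 + Real.sqrt (C/c)) * Real.sqrt p
          * Real.sqrt (∫ ω, (∑ i, (x ω i)^2) ∂μ) := by
          have hT2I : Real.sqrt T2 ≤ Real.sqrt (∫ ω, (∑ i, (x ω i)^2) ∂μ) / Real.sqrt c := by
            rw [le_div_iff₀ (Real.sqrt_pos.2 hc)]
            rw [← Real.sqrt_mul hT20]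
            apply Real.sqrt_le_sqrt
            calc T2 * c = c * T2 := by ring
            _ ≤ _ := hI2_lb
          set I2 := ∫ ω, (∑ i, (x ω i)^2) ∂μ with hI2_def
          have hdiv : Real.sqrt C / Real.sqrt c = Real.sqrt (C/c) :=
            (Real.sqrt_div (le_of_lt hC) c).symm
          calc Real.sqrt C * (K1 * Real.sqrt p * Real.sqrt T2)
              ≤ Real.sqrt C * (K1 * Real.sqrt p * (Real.sqrt I2 / Real.sqrt c)) := by
                apply mul_le_mul_of_nonneg_left _ (Real.sqrt_nonneg C)
                apply mul_le_mul_of_nonneg_left hT2I (by positivity)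
            _ = (Real.sqrt C / Real.sqrt c) * K1 * Real.sqrt p * Real.sqrt I2 := by ring
            _ = Real.sqrt (C/c) * K1 * Real.sqrt p * Real.sqrt I2 := by rw [hdiv]
            _ ≤ K1 * (1 + Real.sqrt (C/c)) * Real.sqrt p * Real.sqrt I2 := by
                have h9 : Real.sqrt (C/c) * K1 ≤ K1 * (1 + Real.sqrt (C/c)) := by
                  nlinarith [Real.sqrt_nonneg (C/c), hK1]
                have h10 : (0:ℝ) ≤ Real.sqrt p * Real.sqrt I2 := by positivity
                calc Real.sqrt (C/c) * K1 * Real.sqrt p * Real.sqrt I2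
                    = (Real.sqrt (C/c) * K1) * (Real.sqrt p * Real.sqrt I2) := by ring
                  _ ≤ (K1 * (1 + Real.sqrt (C/c))) * (Real.sqrt p * Real.sqrt I2) :=
                      mul_le_mul_of_nonneg_right h9 h10
                  _ = K1 * (1 + Real.sqrt (C/c)) * Real.sqrt p * Real.sqrt I2 := by ring


end Paper
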